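/- arXiv:2509.25025 — 2 statements merged into one kernel-verified Lean document; each statement's English description precedes it below -/
import Mathlib

section
/- Let k ≥ 2 be an integer and 0 < β < 1 a real number. Let A ⊆ (0,1) be a set whose Lebesgue outer measure satisfies μ*(A) > β/k, and let B ⊆ (0,1) be an open set with Lebesgue measure μ(B) ≥ 1 − β. Then there exist k elements α₁, α₂, …, α_k of A (not necessarily distinct) such that the fractional part of α₁ + α₂ + ⋯ + α_k belongs to B. -/
open Set MeasureTheory
open scoped Pointwise ENNReal NNReal

local notation "π" => ((↑·) : ℝ → AddCircle (1:ℝ))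

lemma coe_injOn_Ioc' {t x y : ℝ} (hx : x ∈ Set.Ioc t (t+1)) (hy : y ∈ Set.Ioc t (t+1))
    (h : π x = π y) : x = y := by
  have e1 := QuotientAddGroup.equivIocMod_coe (zero_lt_one (α := ℝ)) t x
  have e2 := QuotientAddGroup.equivIocMod_coe (zero_lt_one (α := ℝ)) t y
  calc x = toIocMod zero_lt_one t x := ((toIocMod_eq_self zero_lt_one).2 hx).symm
  _ = ((QuotientAddGroup.equivIocMod zero_lt_one t) (π x) : ℝ) := by rw [e1]
  _ = ((QuotientAddGroup.equivIocMod zero_lt_one t) (π y) : ℝ) := by rw [h]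
  _ = toIocMod zero_lt_one t y := by rw [e2]
  _ = y := (toIocMod_eq_self zero_lt_one).2 hy

lemma mem_image_iff_of_subset_Ioc' {t : ℝ} {s : Set ℝ} (hs : s ⊆ Set.Ioc t (t+1)) (x : AddCircle (1:ℝ)) :
    x ∈ π '' s ↔ ((AddCircle.measurableEquivIoc 1 t x : Set.Ioc t (t+1)) : ℝ) ∈ s := by
  constructor
  · rintro ⟨y, hy, rfl⟩
    have : AddCircle.measurableEquivIoc 1 t (π y) = ⟨y, hs hy⟩ := by
      show AddCircle.equivIoc 1 t (π y) = _
      show QuotientAddGroup.equivIocMod zero_lt_one t (π y) = _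
      rw [QuotientAddGroup.equivIocMod_coe]
      exact Subtype.ext ((toIocMod_eq_self zero_lt_one).2 (hs hy))
    rw [this]; exact hy
  · intro h
    refine ⟨_, h, ?_⟩
    show ((AddCircle.measurableEquivIoc 1 t).symm _ = x)
    exact (AddCircle.measurableEquivIoc 1 t).symm_apply_apply x

lemma measurableSet_image_of_subset_Ioc' {t : ℝ} {s : Set ℝ} (hsm : MeasurableSet s)
    (hs : s ⊆ Set.Ioc t (t+1)) : MeasurableSet (π '' s) := by
  have : π '' s = AddCircle.measurableEquivIoc 1 t ⁻¹' ((↑·) ⁻¹' s) := by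
    ext x; rw [mem_image_iff_of_subset_Ioc' hs]; rfl
  rw [this]
  exact (AddCircle.measurableEquivIoc 1 t).measurable (measurable_subtype_coe hsm)

lemma volume_image_of_subset_Ioc' {t : ℝ} {s : Set ℝ} (hsm : MeasurableSet s)
    (hs : s ⊆ Set.Ioc t (t+1)) : volume (π '' s) = volume s := by
  rw [AddCircle.add_projection_respects_measure 1 t (measurableSet_image_of_subset_Ioc' hsm hs)]
  congr 1
  ext x
  constructor
  · rintro ⟨hx1, hx2⟩
    obtain ⟨y, hy, hxy⟩ := hx1
    rwa [coe_injOn_Ioc' hx2 (hs hy) hxy.symm]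
  · intro hx
    exact ⟨⟨x, hx, rfl⟩, hs hx⟩

/-- the `j`-th arc of length `1/p` -/
noncomputable def arc (p : ℕ) (j : ZMod p) : Set (AddCircle (1:ℝ)) :=
  π '' Set.Ico ((j.val : ℝ)/p) (((j.val : ℝ)+1)/p)

lemma arc_subset_Ioc {p : ℕ} (hp : 1 < p) (j : ZMod p) :
    Set.Ico ((j.val : ℝ)/p) (((j.val : ℝ)+1)/p) ⊆
      Set.Ioc ((((j.val : ℝ)+1)/p) - 1) ((((j.val : ℝ)+1)/p - 1) + 1) := by
  have hp0 : (0:ℝ) < p := by exact_mod_cast Nat.zero_lt_of_lt hp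
  intro x hx
  constructor
  · have : ((j.val : ℝ)+1)/p - (j.val : ℝ)/p = 1/p := by field_simp; ring
    have h1p : (1:ℝ)/p < 1 := by
      rw [div_lt_one hp0]; exact_mod_cast hp
    nlinarith [hx.1, hx.2]
  · have := hx.2.le
    linarith

lemma arc_measurable {p : ℕ} (hp : 1 < p) (j : ZMod p) : MeasurableSet (arc p j) :=
  measurableSet_image_of_subset_Ioc' measurableSet_Ico (arc_subset_Ioc hp j)

lemma arc_volume {p : ℕ} (hp : 1 < p) (j : ZMod p) :
    volume (arc p j) = ENNReal.ofReal (1/p) := by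
  have hp0 : (0:ℝ) < p := by exact_mod_cast Nat.zero_lt_of_lt hp
  rw [arc, volume_image_of_subset_Ioc' measurableSet_Ico (arc_subset_Ioc hp j),
    Real.volume_Ico]
  congr 1
  field_simp
  ring

lemma arc_mem_Ico {p : ℕ} (hp : 1 < p) (j : ZMod p) {y : ℝ}
    (hy : y ∈ Set.Ico ((j.val : ℝ)/p) (((j.val : ℝ)+1)/p)) : y ∈ Set.Ico (0:ℝ) (0+1) := by
  haveI : NeZero p := ⟨Nat.zero_lt_of_lt hp |>.ne'⟩
  have hp0 : (0:ℝ) < p := by exact_mod_cast Nat.zero_lt_of_lt hp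
  have hv : (j.val : ℝ) + 1 ≤ p := by exact_mod_cast ZMod.val_lt j
  constructor
  · have : (0:ℝ) ≤ (j.val : ℝ)/p := by positivity
    linarith [hy.1]
  · have : ((j.val : ℝ)+1)/p ≤ 1 := by
      rw [div_le_one hp0]; exact hv
    simpa using lt_of_lt_of_le hy.2 this

lemma arc_cover {p : ℕ} (hp : 1 < p) (x : AddCircle (1:ℝ)) : ∃ j : ZMod p, x ∈ arc p j := by
  haveI : NeZero p := ⟨(Nat.zero_lt_of_lt hp).ne'⟩
  have hp0 : (0:ℝ) < p := by exact_mod_cast Nat.zero_lt_of_lt hp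
  obtain ⟨y, hy, rfl⟩ := AddCircle.eq_coe_Ico x
  have hy0 : 0 ≤ y * p := by nlinarith [hy.1]
  have hfl : ⌊y * p⌋₊ < p := by
    have h1 : y * p < p := by nlinarith [hy.2]
    have := Nat.floor_le hy0
    exact_mod_cast Nat.floor_lt hy0 |>.2 (by exact_mod_cast h1)
  refine ⟨(⌊y * p⌋₊ : ZMod p), ⟨y, ⟨?_, ?_⟩, rfl⟩⟩
  · rw [ZMod.val_cast_of_lt hfl, div_le_iff₀ hp0]
    exact Nat.floor_le hy0
  · rw [ZMod.val_cast_of_lt hfl, lt_div_iff₀ hp0]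
    exact Nat.lt_floor_add_one (y * p)

lemma arc_disjoint {p : ℕ} (hp : 1 < p) {j j' : ZMod p} (h : j ≠ j') :
    Disjoint (arc p j) (arc p j') := by
  haveI : NeZero p := ⟨(Nat.zero_lt_of_lt hp).ne'⟩
  have hp0 : (0:ℝ) < p := by exact_mod_cast Nat.zero_lt_of_lt hp
  rw [Set.disjoint_left]
  rintro x ⟨y, hy, rfl⟩ ⟨y', hy', hyy⟩
  have hyI := arc_mem_Ico hp j hy
  have hyI' := arc_mem_Ico hp j' hy'
  have : y' = y := (AddCircle.coe_eq_coe_iff_of_mem_Ico hyI' hyI).1 hyy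
  subst this
  apply h
  have hvv : j.val = j'.val := by
    by_contra hne
    rcases Nat.lt_or_ge j.val j'.val with hlt | hge
    · have : (j.val : ℝ) + 1 ≤ (j'.val : ℝ) := by exact_mod_cast hlt
      have := hy.2
      have := hy'.1
      have h1 : ((j.val:ℝ)+1)/p ≤ (j'.val:ℝ)/p := by gcongr
      linarith
    · have hlt' : j'.val < j.val := lt_of_le_of_ne hge (Ne.symm hne)
      have : (j'.val : ℝ) + 1 ≤ (j.val : ℝ) := by exact_mod_cast hlt'
      have := hy'.2
      have := hy.1
      have h1 : ((j'.val:ℝ)+1)/p ≤ (j.val:ℝ)/p := by gcongr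
      linarith
  exact ZMod.val_injective p hvv

noncomputable def Fset (p : ℕ) [NeZero p] (S : Set (AddCircle (1:ℝ))) : Finset (ZMod p) :=
  Set.Finite.toFinset (Set.toFinite {j : ZMod p | (S ∩ arc p j).Nonempty})

lemma mem_Fset {p : ℕ} [NeZero p] {S : Set (AddCircle (1:ℝ))} {j : ZMod p} :
    j ∈ Fset p S ↔ (S ∩ arc p j).Nonempty := Set.Finite.mem_toFinset _

lemma Fset_nonempty {p : ℕ} [NeZero p] (hp : 1 < p) {S : Set (AddCircle (1:ℝ))}
    (hS : S.Nonempty) : (Fset p S).Nonempty := by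
  obtain ⟨x, hx⟩ := hS
  obtain ⟨j, hj⟩ := arc_cover hp x
  exact ⟨j, mem_Fset.2 ⟨x, hx, hj⟩⟩

lemma volume_le_Fset {p : ℕ} [NeZero p] (hp : 1 < p) (S : Set (AddCircle (1:ℝ))) :
    volume S ≤ (Fset p S).card * ENNReal.ofReal (1/p) := by
  have hsub : S ⊆ ⋃ j ∈ Fset p S, arc p j := by
    intro x hx
    obtain ⟨j, hj⟩ := arc_cover hp x
    exact Set.mem_biUnion (mem_Fset.2 ⟨x, hx, hj⟩) hj
  calc volume S ≤ volume (⋃ j ∈ Fset p S, arc p j) := measure_mono hsub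
  _ ≤ ∑ j ∈ Fset p S, volume (arc p j) := measure_biUnion_finset_le _ _
  _ = (Fset p S).card * ENNReal.ofReal (1/p) := by
      rw [Finset.sum_congr rfl (fun j _ => arc_volume hp j), Finset.sum_const, nsmul_eq_mul]

lemma arc_add_subset {p : ℕ} [NeZero p] (hp : 1 < p) {A B : Set (AddCircle (1:ℝ))}
    {j j' : ZMod p} {a b : AddCircle (1:ℝ)} (ha : a ∈ A ∩ arc p j) (hb : b ∈ B ∩ arc p j') :
    arc p (j + j') ⊆ A + B + π '' Set.Icc (-(2/(p:ℝ))) (2/(p:ℝ)) := by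
  have hp0 : (0:ℝ) < p := by exact_mod_cast Nat.zero_lt_of_lt hp
  obtain ⟨s, hs, rfl⟩ := ha.2
  obtain ⟨s', hs', rfl⟩ := hb.2
  rintro x ⟨t, ht, rfl⟩
  set vj := j.val with hvj
  set vj' := j'.val with hvj'
  have hvc : ((j + j').val : ℝ) + p * ((vj + vj')/p : ℕ) = vj + vj' := by
    rw [ZMod.val_add]
    exact_mod_cast Nat.mod_add_div (vj + vj') p
  set q : ℕ := (vj + vj')/p with hq
  set w : ℝ := t + q - s - s' with hw
  have H1 : ((j+j').val:ℝ) ≤ t * p := (div_le_iff₀ hp0).1 ht.1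
  have H2 : t * p < ((j+j').val:ℝ) + 1 := by have := ht.2; rwa [lt_div_iff₀ hp0] at this
  have H3 : (vj:ℝ) ≤ s * p := (div_le_iff₀ hp0).1 hs.1
  have H4 : s * p < (vj:ℝ) + 1 := by have := hs.2; rwa [lt_div_iff₀ hp0] at this
  have H5 : (vj':ℝ) ≤ s' * p := (div_le_iff₀ hp0).1 hs'.1
  have H6 : s' * p < (vj':ℝ) + 1 := by have := hs'.2; rwa [lt_div_iff₀ hp0] at this
  have hwP : w * p = t*p + (q:ℝ)*p - s*p - s'*p := by rw [hw]; ring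
  have hwmem : w ∈ Set.Icc (-(2/(p:ℝ))) ((2:ℝ)/p) := by
    constructor
    · rw [← neg_div, div_le_iff₀ hp0]
      linarith
    · rw [le_div_iff₀ hp0]
      linarith
  have hq0 : (((q:ℝ)) : AddCircle (1:ℝ)) = 0 := by
    rw [AddCircle.coe_eq_zero_iff]
    exact ⟨(q:ℤ), by simp⟩
  have e : t + (q:ℝ) = s + s' + w := by rw [hw]; ring
  have hx : π t = π s + π s' + π w := by
    show (t : AddCircle (1:ℝ)) = (s : AddCircle (1:ℝ)) + ↑s' + ↑w
    calc (t : AddCircle (1:ℝ)) = ↑(t + (q:ℝ)) := by rw [AddCircle.coe_add, hq0, add_zero]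
      _ = ↑(s + s' + w) := by rw [e]
      _ = ↑s + ↑s' + ↑w := by rw [AddCircle.coe_add, AddCircle.coe_add]
  rw [hx]
  exact Set.add_mem_add (Set.add_mem_add ha.1 hb.1) ⟨w, hwmem, rfl⟩

lemma cd_key {p : ℕ} (hp : p.Prime) {A B : Set (AddCircle (1:ℝ))}
    (hAne : A.Nonempty) (hBne : B.Nonempty) :
    min 1 (volume A + volume B) ≤
      volume (A + B + π '' Set.Icc (-(2/(p:ℝ))) (2/(p:ℝ))) + 3 * ENNReal.ofReal (1/p) := by
  haveI : NeZero p := ⟨hp.pos.ne'⟩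
  have hp1 : 1 < p := hp.one_lt
  set ap := ENNReal.ofReal (1/p) with hap
  set FA := Fset p A with hFA
  set FB := Fset p B with hFB
  have hcd := ZMod.cauchy_davenport hp (Fset_nonempty hp1 hAne) (Fset_nonempty hp1 hBne)
  rw [← hFA, ← hFB] at hcd
  have hsub : (⋃ u ∈ FA + FB, arc p u) ⊆ A + B + π '' Set.Icc (-(2/(p:ℝ))) (2/(p:ℝ)) := by
    intro x hx
    obtain ⟨u, hu, hxu⟩ := Set.mem_iUnion₂.1 hx
    obtain ⟨j, hj, j', hj', rfl⟩ := Finset.mem_add.1 hu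
    obtain ⟨a, haA⟩ := mem_Fset.1 hj
    obtain ⟨b, hbB⟩ := mem_Fset.1 hj'
    exact arc_add_subset hp1 haA hbB hxu
  have hlow : ((FA + FB).card : ℝ≥0∞) * ap ≤ volume (A + B + π '' Set.Icc (-(2/(p:ℝ))) (2/(p:ℝ))) := by
    have := measure_biUnion_finset (μ := volume)
      (fun u (_ : u ∈ FA + FB) u' _ huu' => arc_disjoint hp1 huu')
      (fun u _ => arc_measurable hp1 u)
    calc ((FA + FB).card : ℝ≥0∞) * ap
        = ∑ u ∈ FA + FB, volume (arc p u) := by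
          rw [Finset.sum_congr rfl (fun j _ => arc_volume hp1 j), Finset.sum_const, nsmul_eq_mul]
      _ = volume (⋃ u ∈ FA + FB, arc p u) := this.symm
      _ ≤ _ := measure_mono hsub
  rcases le_or_gt p (FA.card + FB.card - 1) with hcase | hcase
  · -- min = p, measure of union is everything
    have hc : (p : ℝ≥0∞) * ap ≤ ((FA + FB).card : ℝ≥0∞) * ap := by
      have hple : p ≤ (FA + FB).card := by
        rw [min_eq_left hcase] at hcd; exact hcd
      exact mul_le_mul_left (by exact_mod_cast hple) ap
    have h1 : (1 : ℝ≥0∞) ≤ (p : ℝ≥0∞) * ap := by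
      have hppos : (0:ℝ) < p := by exact_mod_cast hp.pos
      rw [hap, ← ENNReal.ofReal_natCast, ← ENNReal.ofReal_mul (by positivity)]
      rw [mul_one_div, div_self hppos.ne']
      simp
    calc min 1 (volume A + volume B) ≤ 1 := min_le_left _ _
      _ ≤ (p : ℝ≥0∞) * ap := h1
      _ ≤ ((FA + FB).card : ℝ≥0∞) * ap := hc
      _ ≤ _ := le_trans hlow le_self_add
  · -- min = card sum - 1
    have hc2 : FA.card + FB.card ≤ (FA + FB).card + 3 := by
      rw [min_eq_right (le_of_lt hcase)] at hcd
      omega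
    calc min 1 (volume A + volume B) ≤ volume A + volume B := min_le_right _ _
      _ ≤ FA.card * ap + FB.card * ap :=
          add_le_add (volume_le_Fset hp1 A) (volume_le_Fset hp1 B)
      _ = ((FA.card + FB.card : ℕ) : ℝ≥0∞) * ap := by push_cast; ring
      _ ≤ (((FA + FB).card + 3 : ℕ) : ℝ≥0∞) * ap :=
          mul_le_mul_left (by exact_mod_cast hc2) ap
      _ = ((FA + FB).card : ℝ≥0∞) * ap + 3 * ap := by push_cast; ring
      _ ≤ _ := add_le_add hlow (le_refl _)


lemma raikov_two {A B : Set (AddCircle (1:ℝ))} (hA : IsCompact A) (hB : IsCompact B)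
    (hAne : A.Nonempty) (hBne : B.Nonempty) :
    min 1 (volume A + volume B) ≤ volume (A + B) := by
  have hcont : Continuous π := AddCircle.continuous_mk' 1
  set K : ℕ → Set (AddCircle (1:ℝ)) := fun n => π '' Set.Icc (-(2/(n:ℝ))) (2/(n:ℝ)) with hK
  have hKcomp : ∀ n, IsCompact (K n) := fun n => isCompact_Icc.image hcont
  have hKmono : ∀ {n m : ℕ}, n ≤ m → 0 < n → K m ⊆ K n := by
    intro n m hnm hn
    apply Set.image_mono
    have hn' : (0:ℝ) < n := by exact_mod_cast hn
    have hm' : (0:ℝ) < m := by have : 0 < m := lt_of_lt_of_le hn hnm; exact_mod_cast this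
    have hnm' : (n:ℝ) ≤ m := by exact_mod_cast hnm
    have h2 : (2:ℝ)/m ≤ 2/n := by rw [div_le_div_iff₀ hm' hn']; linarith
    exact Set.Icc_subset_Icc (by linarith) h2
  set J : ℕ → Set (AddCircle (1:ℝ)) := fun n => A + B + K (n+1) with hJ
  have hJcomp : ∀ n, IsCompact (J n) := fun n => (hA.add hB).add (hKcomp (n+1))
  have hABclosed : IsClosed (A + B) := (hA.add hB).isClosed
  have hJanti : Antitone J := by
    intro n m hnm
    exact Set.add_subset_add_left (hKmono (by omega) (by omega))
  have hInter : (⋂ n, J n) = A + B := by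
    apply Set.Subset.antisymm
    · intro x hx
      simp only [Set.mem_iInter] at hx
      have hchoice : ∀ n : ℕ, ∃ w : ℝ, w ∈ Set.Icc (-(2/((n:ℝ)+1))) (2/((n:ℝ)+1)) ∧
          x - π w ∈ A + B := by
        intro n
        obtain ⟨c, hc, y, hy, hcy⟩ := hx n
        obtain ⟨w, hw, rfl⟩ := hy
        refine ⟨w, by exact_mod_cast hw, ?_⟩
        rw [← hcy]; simpa using hc
      choose w hw hmem using hchoice
      have h2to : Filter.Tendsto (fun n : ℕ => 2*(1/((n:ℝ)+1))) Filter.atTop (nhds (2*0)) :=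
        tendsto_one_div_add_atTop_nhds_zero_nat.const_mul 2
      rw [mul_zero] at h2to
      have hwto : Filter.Tendsto w Filter.atTop (nhds 0) := by
        apply squeeze_zero_norm (fun n => ?_) h2to
        rw [Real.norm_eq_abs, abs_le, mul_one_div]
        exact ⟨by linarith [(hw n).1], (hw n).2⟩
      have hπw : Filter.Tendsto (fun n => π (w n)) Filter.atTop (nhds 0) := by
        have := (hcont.tendsto 0).comp hwto
        simpa [Function.comp_def] using this
      have hcto : Filter.Tendsto (fun n => x - π (w n)) Filter.atTop (nhds x) := by
        have := Filter.Tendsto.sub (tendsto_const_nhds (x := x) (f := Filter.atTop (α := ℕ))) hπw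
        simpa using this
      exact hABclosed.mem_of_tendsto hcto (Filter.Eventually.of_forall hmem)
    · intro x hx
      apply Set.mem_iInter.2
      intro n
      refine ⟨x, hx, 0, ⟨0, ⟨?_, ?_⟩, rfl⟩, by simp⟩
      · rw [neg_nonpos]; positivity
      · positivity
  have hiInf : volume (A + B) = ⨅ n, volume (J n) := by
    rw [← hInter]
    exact hJanti.measure_iInter (fun n => ((hJcomp n).isClosed.measurableSet).nullMeasurableSet)
      ⟨0, measure_ne_top _ _⟩
  apply ENNReal.le_of_forall_pos_le_add
  intro ε hε _
  set δ : ℝ≥0∞ := (ε : ℝ≥0∞)/2 with hδ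
  have hδ0 : δ ≠ 0 := by
    simp [hδ, hε.ne']
  have hlt : (⨅ n, volume (J n)) < volume (A + B) + δ := by
    rw [← hiInf]
    exact ENNReal.lt_add_right (measure_ne_top _ _) hδ0
  obtain ⟨n₀, hn₀⟩ := iInf_lt_iff.1 hlt
  set M := ⌈(6:ℝ)/(ε:ℝ)⌉₊ with hM
  obtain ⟨p, hpge, hpp⟩ := Nat.exists_infinite_primes (max (n₀+1) M + 1)
  have hp1 : 1 < p := hpp.one_lt
  have hp0 : (0:ℝ) < p := by exact_mod_cast Nat.zero_lt_of_lt hp1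
  have key := cd_key hpp hAne hBne
  have hsub : A + B + π '' Set.Icc (-(2/(p:ℝ))) (2/(p:ℝ)) ⊆ J n₀ := by
    apply Set.add_subset_add_left
    have h1 : n₀ + 1 ≤ p := by have := le_max_left (n₀+1) M; omega
    exact hKmono (n := n₀+1) (m := p) h1 (Nat.succ_pos _)
  have hεpos : (0:ℝ) < ε := hε
  have h3 : 3 * ENNReal.ofReal (1/(p:ℝ)) ≤ δ := by
    have hp6 : (6:ℝ)/(ε:ℝ) ≤ p := by
      calc (6:ℝ)/(ε:ℝ) ≤ M := Nat.le_ceil _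
      _ ≤ p := by
          have h1 : M ≤ p := le_trans (le_max_right (n₀+1) M) (by omega)
          exact_mod_cast h1
    have hreal : (3:ℝ)/p ≤ (ε:ℝ)/2 := by
      rw [div_le_div_iff₀ hp0 two_pos]
      rw [div_le_iff₀ hεpos] at hp6
      linarith
    calc 3 * ENNReal.ofReal (1/(p:ℝ)) = ENNReal.ofReal ((3:ℝ)/p) := by
          rw [← ENNReal.ofReal_ofNat 3, ← ENNReal.ofReal_mul (by norm_num), mul_one_div]
      _ ≤ ENNReal.ofReal ((ε:ℝ)/2) := ENNReal.ofReal_le_ofReal hreal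
      _ = δ := by
          rw [hδ, ENNReal.ofReal_div_of_pos two_pos, ENNReal.ofReal_coe_nnreal,
            ENNReal.ofReal_ofNat]
  calc min 1 (volume A + volume B)
      ≤ volume (A + B + π '' Set.Icc (-(2/(p:ℝ))) (2/(p:ℝ))) + 3 * ENNReal.ofReal (1/(p:ℝ)) := key
    _ ≤ volume (J n₀) + δ := add_le_add (measure_mono hsub) h3
    _ ≤ (volume (A + B) + δ) + δ := add_le_add_left hn₀.le _
    _ = volume (A + B) + ε := by
        rw [add_assoc]
        simp only [hδ]
        rw [ENNReal.add_halves]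

noncomputable def iterSum (E : Set (AddCircle (1:ℝ))) : ℕ → Set (AddCircle (1:ℝ))
  | 0 => E
  | n+1 => iterSum E n + E

lemma iterSum_compact {E : Set (AddCircle (1:ℝ))} (hE : IsCompact E) (n : ℕ) :
    IsCompact (iterSum E n) := by
  induction n with
  | zero => exact hE
  | succ n ih => exact ih.add hE

lemma iterSum_nonempty {E : Set (AddCircle (1:ℝ))} (hE : E.Nonempty) (n : ℕ) :
    (iterSum E n).Nonempty := by
  induction n with
  | zero => exact hE
  | succ n ih => exact ih.add hE

lemma iterSum_mem {E : Set (AddCircle (1:ℝ))} {n : ℕ} {x : AddCircle (1:ℝ)}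
    (hx : x ∈ iterSum E n) : ∃ f : Fin (n+1) → AddCircle (1:ℝ),
      (∀ i, f i ∈ E) ∧ x = ∑ i, f i := by
  induction n generalizing x with
  | zero => exact ⟨fun _ => x, fun _ => hx, by simp⟩
  | succ n ih =>
    obtain ⟨y, hy, e, he, rfl⟩ := hx
    obtain ⟨f, hf, rfl⟩ := ih hy
    refine ⟨Fin.snoc f e, ?_, ?_⟩
    · intro i
      refine Fin.lastCases ?_ ?_ i
      · simp [he]
      · intro j; simp [hf j]
    · simp [Fin.sum_univ_castSucc (f := Fin.snoc f e)]

lemma raikov_iter {E : Set (AddCircle (1:ℝ))} (hE : IsCompact E) (hne : E.Nonempty) (n : ℕ) :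
    min 1 ((n+1 : ℕ) * volume E) ≤ volume (iterSum E n) := by
  induction n with
  | zero =>
    have h1 : ((0+1:ℕ):ℝ≥0∞) = 1 := by norm_num
    rw [h1, one_mul]
    exact min_le_right _ _
  | succ n ih =>
    have harith : min 1 ((n+2 : ℕ) * volume E) ≤ min 1 (min 1 ((n+1 : ℕ) * volume E) + volume E) := by
      rcases le_total ((n+1 : ℕ) * volume E) 1 with h | h
      · rw [min_eq_right h]
        have : ((n+2 : ℕ) : ℝ≥0∞) * volume E = ((n+1:ℕ):ℝ≥0∞) * volume E + volume E := by
          push_cast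
          ring
        rw [this]
      · rw [min_eq_left h]
        rw [min_eq_left (le_self_add : (1:ℝ≥0∞) ≤ 1 + volume E)]
        exact min_le_left _ _
    calc min 1 ((n+1+1 : ℕ) * volume E) ≤ min 1 (min 1 ((n+1 : ℕ) * volume E) + volume E) := harith
      _ ≤ min 1 (volume (iterSum E n) + volume E) := by
          exact min_le_min (le_refl _) (add_le_add_left ih _)
      _ ≤ volume (iterSum E n + E) :=
          raikov_two (iterSum_compact hE n) hE (iterSum_nonempty hne n) hne
      _ = volume (iterSum E (n+1)) := rfl

/-- The hull-chain argument: from sums of `A'` landing in closed `C`, produce a single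
closed superset `E` of `A'` all of whose `k`-element sums land in `C`. -/
lemma chain_lemma (k : ℕ) (A' C : Set (AddCircle (1:ℝ))) (hC : IsClosed C)
    (hsum : ∀ g : Fin k → AddCircle (1:ℝ), (∀ i, g i ∈ A') → ∑ i, g i ∈ C) :
    ∃ E : Set (AddCircle (1:ℝ)), IsClosed E ∧ A' ⊆ E ∧
      ∀ g : Fin k → AddCircle (1:ℝ), (∀ i, g i ∈ E) → ∑ i, g i ∈ C := by
  -- T m : set of m-fold sums of elements of A'
  set T : ℕ → Set (AddCircle (1:ℝ)) :=
    fun m => {x | ∃ h : Fin m → AddCircle (1:ℝ), (∀ i, h i ∈ A') ∧ x = ∑ i, h i} with hT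
  have hTstep : ∀ {m : ℕ} {a t : AddCircle (1:ℝ)}, a ∈ A' → t ∈ T m → a + t ∈ T (m+1) := by
    rintro m a t ha ⟨h, hh, rfl⟩
    exact ⟨Fin.cons a h, fun i => Fin.cases ha hh i, by rw [Fin.sum_cons]⟩
  have main : ∀ j : ℕ, j ≤ k → ∃ E : Set (AddCircle (1:ℝ)), IsClosed E ∧ A' ⊆ E ∧
      ∀ f : Fin j → AddCircle (1:ℝ), (∀ i, f i ∈ E) →
        ∀ t ∈ T (k - j), (∑ i, f i) + t ∈ C := by
    intro j
    induction j with
    | zero =>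
      intro _
      refine ⟨Set.univ, isClosed_univ, Set.subset_univ _, ?_⟩
      rintro f _ t ⟨h, hh, rfl⟩
      have : (∑ i : Fin 0, f i) + ∑ i, h i = ∑ i, h i := by simp
      rw [this]
      exact hsum h hh
    | succ j ih =>
      intro hjk
      obtain ⟨E, hEc, hAE, hEP⟩ := ih (by omega)
      set D : Set (AddCircle (1:ℝ)) :=
        ⋂ (f : Fin j → AddCircle (1:ℝ)) (_ : ∀ i, f i ∈ E) (t : AddCircle (1:ℝ))
          (_ : t ∈ T (k - (j+1))), (fun x => x + ((∑ i, f i) + t)) ⁻¹' C with hD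
      have hDmem : ∀ {x : AddCircle (1:ℝ)}, x ∈ D ↔ ∀ (f : Fin j → AddCircle (1:ℝ)),
          (∀ i, f i ∈ E) → ∀ t ∈ T (k-(j+1)), x + ((∑ i, f i) + t) ∈ C := by
        intro x
        simp only [hD, Set.mem_iInter, Set.mem_preimage]
      have hDc : IsClosed D := by
        apply isClosed_iInter; intro f
        apply isClosed_iInter; intro hf
        apply isClosed_iInter; intro t
        apply isClosed_iInter; intro ht
        exact IsClosed.preimage (continuous_add_right _) hC
      have hAD : A' ⊆ D := by
        intro a ha
        rw [hDmem]
        intro f hf t ht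
        have h1 : a + t ∈ T (k - j) := by
          have h2 := hTstep ha ht
          have heq : k - (j+1) + 1 = k - j := by omega
          rwa [heq] at h2
        have h3 := hEP f hf (a + t) h1
        have heq2 : a + ((∑ i, f i) + t) = (∑ i, f i) + (a + t) := add_left_comm _ _ _
        rwa [heq2]
      refine ⟨E ∩ D, hEc.inter hDc, Set.subset_inter hAE hAD, ?_⟩
      intro f hf t ht
      rw [Fin.sum_univ_succ]
      have h0 : f 0 ∈ D := (hf 0).2
      have htail : ∀ i : Fin j, f i.succ ∈ E := fun i => (hf i.succ).1
      have h4 := (hDmem.1 h0) (fun i => f i.succ) htail t ht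
      have heq : (f 0 + ∑ i : Fin j, f i.succ) + t = f 0 + ((∑ i : Fin j, f i.succ) + t) :=
        add_assoc _ _ _
      rwa [heq]
  obtain ⟨E, hEc, hAE, hEP⟩ := main k (le_refl k)
  refine ⟨E, hEc, hAE, ?_⟩
  intro g hg
  have h0 : (0:AddCircle (1:ℝ)) ∈ T (k - k) := by
    have hkk : k - k = 0 := by omega
    rw [hkk]
    exact ⟨fun i => i.elim0, fun i => i.elim0, by simp⟩
  have h5 := hEP g hg 0 h0
  simpa using h5

lemma volume_le_volume_image {S : Set ℝ} (hS : S ⊆ Set.Ioc 0 1) :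
    volume S ≤ volume (π '' S) := by
  rw [measure_eq_iInf (π '' S)]
  refine le_iInf fun t => le_iInf fun hsub => le_iInf fun hmeas => ?_
  rw [AddCircle.add_projection_respects_measure 1 0 hmeas]
  apply measure_mono
  intro x hx
  refine ⟨hsub ⟨x, hx, rfl⟩, by simpa using hS hx⟩

lemma coe_fract (σ : ℝ) : (↑(Int.fract σ) : AddCircle (1:ℝ)) = ↑σ := by
  have h0 : ((↑(⌊σ⌋:ℝ)) : AddCircle (1:ℝ)) = 0 := by
    rw [AddCircle.coe_eq_zero_iff]
    exact ⟨⌊σ⌋, by simp⟩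
  rw [Int.fract, AddCircle.coe_sub, h0, sub_zero]

/-- **Modular Brunn–Minkowski (Theorem 2).**
Let `k ≥ 2` and `0 < β < 1`. Let `A ⊆ (0,1)` have Lebesgue outer measure `> β/k`
and let `B ⊆ (0,1)` be open with Lebesgue measure `≥ 1 - β`. Then some sum of `k`
elements of `A` lies in `B` modulo 1. -/
theorem modular_brunn_minkowski (k : ℕ) (hk : 2 ≤ k) (β : ℝ) (hβ0 : 0 < β) (hβ1 : β < 1)
    (A B : Set ℝ) (hA : A ⊆ Set.Ioo 0 1)
    (hAmeas : MeasureTheory.volume A > ENNReal.ofReal (β / k))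
    (hBopen : IsOpen B) (hB : B ⊆ Set.Ioo 0 1)
    (hBmeas : MeasureTheory.volume B ≥ ENNReal.ofReal (1 - β)) :
    ∃ g : Fin k → ℝ, (∀ i, g i ∈ A) ∧ Int.fract (∑ i, g i) ∈ B := by
  obtain ⟨m, rfl⟩ : ∃ m, k = m + 1 := ⟨k - 1, by omega⟩
  by_contra hcon
  push_neg at hcon
  have hcont : Continuous π := AddCircle.continuous_mk' 1
  set A' : Set (AddCircle (1:ℝ)) := π '' A with hA'
  set C : Set (AddCircle (1:ℝ)) := π '' (Set.Icc 0 1 \ B) with hC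
  have hCc : IsClosed C := ((isCompact_Icc.diff hBopen).image hcont).isClosed
  -- all (m+1)-fold sums of A' land in C
  have hsum : ∀ g : Fin (m+1) → AddCircle (1:ℝ), (∀ i, g i ∈ A') → ∑ i, g i ∈ C := by
    intro g hg
    choose a haA hag using fun i => hg i
    have hgsum : ∑ i, g i = π (∑ i, a i) := by
      have := map_sum (QuotientAddGroup.mk' (AddSubgroup.zmultiples (1:ℝ))) a Finset.univ
      rw [Finset.sum_congr rfl (fun i _ => (hag i).symm)]
      exact this.symm
    set σ := ∑ i, a i with hσ
    have hfr : Int.fract σ ∈ Set.Icc (0:ℝ) 1 \ B :=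
      ⟨⟨Int.fract_nonneg σ, (Int.fract_lt_one σ).le⟩, hcon a haA⟩
    rw [hgsum]
    exact ⟨Int.fract σ, hfr, coe_fract σ⟩
  obtain ⟨E, hEc, hAE, hEP⟩ := chain_lemma (m+1) A' C hCc hsum
  have hEcomp : IsCompact E := hEc.isCompact
  have hAne : A.Nonempty := by
    rcases Set.eq_empty_or_nonempty A with h | h
    · rw [h] at hAmeas
      simp only [measure_empty] at hAmeas
      exact absurd hAmeas (by simp)
    · exact h
  have hEne : E.Nonempty := by
    obtain ⟨a, ha⟩ := hAne
    exact ⟨π a, hAE ⟨a, ha, rfl⟩⟩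
  have hEvol : ENNReal.ofReal (β/(m+1:ℕ)) < volume E :=
    lt_of_lt_of_le hAmeas (le_trans (volume_le_volume_image
      (fun x hx => Set.Ioo_subset_Ioc_self (hA hx))) (measure_mono hAE))
  have hsubC : iterSum E m ⊆ C := by
    intro x hx
    obtain ⟨f, hf, rfl⟩ := iterSum_mem hx
    exact hEP f hf
  -- volume of C is at most β
  have hper : ((1:ℝ) : AddCircle (1:ℝ)) = 0 := AddCircle.coe_period (1:ℝ)
  have hone : ({(0:AddCircle (1:ℝ))} : Set (AddCircle (1:ℝ))) = π '' {1} := by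
    rw [Set.image_singleton]
    exact (Set.singleton_eq_singleton_iff.2 hper.symm)
  have hCvol : volume C ≤ ENNReal.ofReal β := by
    have hsplit : Set.Icc (0:ℝ) 1 \ B ⊆ (Set.Ioc 0 1 \ B) ∪ {0} := by
      rintro x ⟨⟨hx0, hx1⟩, hxB⟩
      rcases eq_or_lt_of_le hx0 with h0 | h0
      · exact Or.inr (by simp [← h0])
      · exact Or.inl ⟨⟨h0, hx1⟩, hxB⟩
    have himg : C ⊆ π '' (Set.Ioc 0 1 \ B) ∪ {(0:AddCircle (1:ℝ))} := by
      rw [hC, hone]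
      calc π '' (Set.Icc 0 1 \ B) ⊆ π '' ((Set.Ioc 0 1 \ B) ∪ {0}) := Set.image_mono hsplit
        _ = π '' (Set.Ioc 0 1 \ B) ∪ π '' {0} := Set.image_union _ _ _
        _ ⊆ π '' (Set.Ioc 0 1 \ B) ∪ π '' {1} := by
            apply Set.union_subset_union_right
            rw [Set.image_singleton, Set.image_singleton]
            intro x hx
            simp only [Set.mem_singleton_iff] at hx ⊢
            rw [hx]
            show ((0:ℝ) : AddCircle (1:ℝ)) = ((1:ℝ) : AddCircle (1:ℝ))
            exact hper.symm ▸ rfl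
    have hmeasB : MeasurableSet B := hBopen.measurableSet
    have hBIoc : B ⊆ Set.Ioc 0 1 := fun x hx => Set.Ioo_subset_Ioc_self (hB hx)
    have h1 : volume (π '' (Set.Ioc 0 1 \ B)) = volume (Set.Ioc (0:ℝ) 1 \ B) := by
      apply volume_image_of_subset_Ioc' (t := 0) (measurableSet_Ioc.diff hmeasB)
      intro x hx
      simpa using hx.1
    have h2 : volume (π '' ({1} : Set ℝ)) = 0 := by
      rw [volume_image_of_subset_Ioc' (t := 0) (measurableSet_singleton 1)
        (Set.singleton_subset_iff.2 (by norm_num))]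
      simp
    have h3 : volume (Set.Ioc (0:ℝ) 1 \ B) ≤ ENNReal.ofReal β := by
      have hBfin : volume B ≠ ⊤ := by
        apply ne_top_of_le_ne_top _ (measure_mono hBIoc)
        rw [Real.volume_Ioc]
        exact ENNReal.ofReal_ne_top
      rw [measure_diff hBIoc hmeasB.nullMeasurableSet hBfin, Real.volume_Ioc]
      have : ENNReal.ofReal β = ENNReal.ofReal (1 - 0 : ℝ) - ENNReal.ofReal (1 - β) := by
        rw [← ENNReal.ofReal_sub _ (by linarith)]
        norm_num
      rw [this]
      exact tsub_le_tsub_left hBmeas _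
    calc volume C ≤ volume (π '' (Set.Ioc 0 1 \ B) ∪ {(0:AddCircle (1:ℝ))}) := measure_mono himg
      _ ≤ volume (π '' (Set.Ioc 0 1 \ B)) + volume ({(0:AddCircle (1:ℝ))} : Set (AddCircle (1:ℝ))) :=
          measure_union_le _ _
      _ = volume (Set.Ioc (0:ℝ) 1 \ B) + 0 := by rw [h1, hone, h2]
      _ ≤ ENNReal.ofReal β := by rw [add_zero]; exact h3
  -- the contradiction
  have hiter := raikov_iter hEcomp hEne m
  have hβk : ENNReal.ofReal β < min 1 ((m+1 : ℕ) * volume E) := by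
    apply lt_min
    · exact ENNReal.ofReal_lt_one.2 hβ1
    · have heq : ENNReal.ofReal β = ((m+1:ℕ):ℝ≥0∞) * ENNReal.ofReal (β/(m+1:ℕ)) := by
        rw [← ENNReal.ofReal_natCast, ← ENNReal.ofReal_mul (by positivity)]
        congr 1
        field_simp
      rw [heq]
      exact (ENNReal.mul_lt_mul_iff_right (by simp) (by simp)).2 hEvol
  exact absurd (le_trans hiter (le_trans (measure_mono hsubC) hCvol)) (not_le.2 hβk)
end

section
/- Let k ≥ 2 be an integer and 0 < β < 1 a real number. Let A ⊆ (0,1) be an open set with Lebesgue measure μ(A) > β/k. Then the set {frac(a₁ + a₂ + ⋯ + a_k) : aᵢ ∈ A for 1 ≤ i ≤ k} ⊆ [0,1), i.e., the image of the k-fold sumset of A under reduction modulo 1, has Lebesgue measure strictly greater than β. -/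
open Finset MeasureTheory Set
open scoped Pointwise ENNReal

private lemma approx_lemma (A : Set ℝ) (hAopen : IsOpen A) (hA : A ⊆ Set.Ioo 0 1) (c : ℝ) (hc : 0 ≤ c)
    (h : volume A > ENNReal.ofReal c) (k : ℕ) :
    ∃ p : ℕ, p.Prime ∧ k < p ∧ ∃ T : Finset ℕ,
      (∀ t ∈ T, t < p ∧ Set.Icc ((t : ℝ)/p) ((t+1)/p) ⊆ A) ∧ c < T.card / p := by
  classical
  have hAfin : volume A ≠ ⊤ := by
    refine ne_top_of_le_ne_top ?_ (measure_mono hA)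
    simp [Real.volume_Ioo]
  -- compact subset of big measure
  have hε : volume A - ENNReal.ofReal c ≠ 0 := by
    simp only [ne_eq, tsub_eq_zero_iff_le, not_le]; exact h
  obtain ⟨K, hKA, hKc, hKm⟩ := hAopen.measurableSet.exists_isCompact_lt_add hAfin hε
  have hKbig : ENNReal.ofReal c < volume K := by
    by_contra hcon
    push_neg at hcon
    have := hKm.trans_le (add_le_add hcon le_rfl)
    rw [add_tsub_cancel_of_le h.le] at this
    exact lt_irrefl _ this
  obtain ⟨δ, hδ0, hδ⟩ := hKc.exists_thickening_subset_open hAopen hKA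
  obtain ⟨p, hpk, hp⟩ := Nat.exists_infinite_primes (max (k+1) (⌈1/δ⌉₊ + 1))
  have hkp : k < p := lt_of_lt_of_le (by omega : k < max (k+1) (⌈1/δ⌉₊ + 1)) hpk
  have hp0 : (0:ℝ) < p := by exact_mod_cast hp.pos
  have hδp : 1/(p:ℝ) < δ := by
    have h1 : (⌈1/δ⌉₊ : ℝ) < p := by
      have : ⌈1/δ⌉₊ + 1 ≤ p := le_trans (le_max_right _ _) hpk
      exact_mod_cast by omega
    have h2 : 1/δ ≤ (⌈1/δ⌉₊ : ℝ) := Nat.le_ceil _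
    rw [div_lt_iff₀ hp0]
    have : 1/δ < p := lt_of_le_of_lt h2 h1
    calc (1:ℝ) = δ * (1/δ) := by field_simp
    _ < δ * p := by exact mul_lt_mul_of_pos_left this hδ0
    _ = δ * p := rfl
  refine ⟨p, hp, hkp, (Finset.range p).filter (fun t : ℕ => Set.Icc ((t : ℝ)/p) ((t+1)/p) ⊆ A), ?_, ?_⟩
  · intro t ht
    simp only [Finset.mem_filter, Finset.mem_range] at ht
    exact ⟨ht.1, ht.2⟩
  · -- K covered by the selected cells
    set T := (Finset.range p).filter (fun t : ℕ => Set.Icc ((t : ℝ)/p) ((t+1)/p) ⊆ A) with hTdef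
    have hcover : K ⊆ ⋃ t ∈ T, Set.Icc ((t : ℝ)/p) ((t+1)/p) := by
      intro x hxK
      have hx01 : x ∈ Set.Ioo (0:ℝ) 1 := hA (hKA hxK)
      set t : ℕ := ⌊x * p⌋₊ with htdef
      have htle : (t : ℝ) ≤ x * p := Nat.floor_le (mul_nonneg hx01.1.le hp0.le)
      have htgt : x * p < t + 1 := Nat.lt_floor_add_one _
      have hxt1 : (t : ℝ)/p ≤ x := by rw [div_le_iff₀ hp0]; linarith [htle]
      have hxt2 : x ≤ ((t : ℝ)+1)/p := by rw [le_div_iff₀ hp0]; linarith [htgt]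
      have htp : t < p := by
        have : (t:ℝ) < p := lt_of_le_of_lt htle (by nlinarith [hx01.2, hp0])
        exact_mod_cast this
      have hcell : Set.Icc ((t : ℝ)/p) ((t+1)/p) ⊆ A := by
        intro y hy
        apply hδ
        rw [Metric.mem_thickening_iff]
        refine ⟨x, hxK, ?_⟩
        rw [Real.dist_eq, abs_lt]
        have h1p : ((t:ℝ)+1)/p = (t:ℝ)/p + 1/p := by ring
        constructor <;> [skip; skip] <;> nlinarith [hy.1, hy.2, hxt1, hxt2, hδp, hδ0]
      refine Set.mem_iUnion₂.2 ⟨t, ?_, ⟨hxt1, hxt2⟩⟩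
      simp only [hTdef, Finset.mem_filter, Finset.mem_range]
      exact ⟨htp, hcell⟩
    have hmeas : volume K ≤ (T.card : ℝ≥0∞) * ENNReal.ofReal (1/p) := by
      calc volume K ≤ volume (⋃ t ∈ T, Set.Icc ((t : ℝ)/p) ((t+1)/p)) := measure_mono hcover
      _ ≤ ∑ t ∈ T, volume (Set.Icc ((t : ℝ)/p) ((t+1)/p)) := measure_biUnion_finset_le _ _
      _ = ∑ t ∈ T, ENNReal.ofReal (1/p) := by
          refine Finset.sum_congr rfl fun t _ => ?_
          rw [Real.volume_Icc]
          congr 1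
          field_simp; ring
      _ = (T.card : ℝ≥0∞) * ENNReal.ofReal (1/p) := by
          rw [Finset.sum_const, nsmul_eq_mul]
    have hfin : ENNReal.ofReal c < ENNReal.ofReal ((T.card : ℝ) / p) := by
      refine lt_of_lt_of_le (hKbig.trans_le hmeas) ?_
      rw [div_eq_mul_one_div, ← ENNReal.ofReal_natCast (T.card), ← ENNReal.ofReal_mul (by positivity)]
      exact ENNReal.ofReal_le_ofReal (le_of_eq (by ring))
    exact (ENNReal.ofReal_lt_ofReal_iff_of_nonneg hc).1 hfin

private lemma nsmul_card_ge {p : ℕ} (hp : p.Prime) (T : Finset (ZMod p)) (hT : T.Nonempty) :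
    ∀ j : ℕ, min p ((j+1) * T.card - j) ≤ ((j+1) • T).card := by
  classical
  intro j
  induction j with
  | zero => simpa [one_nsmul] using min_le_right p T.card
  | succ j ih =>
    have hTc : 1 ≤ T.card := hT.card_pos
    have hp2 : 2 ≤ p := hp.two_le
    have hjc : j + 1 ≤ (j+1) * T.card := Nat.le_mul_of_pos_right _ hTc
    have hnem : ((j+1) • T).Nonempty := by
      rw [← Finset.card_pos]
      refine lt_of_lt_of_le ?_ ih
      omega
    have hadd : ((j+1+1) • T) = (j+1) • T + T := succ_nsmul T (j+1)
    have hCD := ZMod.cauchy_davenport hp hnem hT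
    rw [hadd]
    have hmul : (j+1+1) * T.card = (j+1) * T.card + T.card := by ring
    omega

private lemma exists_rep {p : ℕ} [NeZero p] (T : Finset ℕ) :
    ∀ (j : ℕ) (e : ZMod p), e ∈ (j+1) • (T.image (Nat.cast : ℕ → ZMod p)) →
      ∃ f : Fin (j+1) → ℕ, (∀ i, f i ∈ T) ∧ ((∑ i, f i : ℕ) : ZMod p) = e := by
  classical
  intro j
  induction j with
  | zero =>
    intro e he
    rw [one_nsmul, Finset.mem_image] at he
    obtain ⟨t, ht, rfl⟩ := he
    exact ⟨fun _ => t, fun _ => ht, by simp⟩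
  | succ j ih =>
    intro e he
    rw [succ_nsmul, Finset.mem_add] at he
    obtain ⟨b, hb, cc, hc, rfl⟩ := he
    obtain ⟨f, hf, hsum⟩ := ih b hb
    rw [Finset.mem_image] at hc
    obtain ⟨t, ht, rfl⟩ := hc
    refine ⟨Fin.snoc f t, ?_, ?_⟩
    · intro i
      refine Fin.lastCases ?_ ?_ i
      · simp [Fin.snoc_last]; exact ht
      · intro i'; simp [Fin.snoc_castSucc]; exact hf i'
    · rw [Fin.sum_univ_castSucc]
      simp only [Fin.snoc_castSucc, Fin.snoc_last]
      push_cast at hsum ⊢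
      rw [hsum]

set_option maxHeartbeats 1000000 in
/-- **Modular Brunn–Minkowski inequality (Remark after Theorem 2).**
If `A ⊆ (0,1)` is open with `μ(A) > β/k`, then the reduction mod 1 of the
`k`-fold sumset of `A` has Lebesgue measure `> β`. -/
theorem modular_brunn_minkowski_measure (k : ℕ) (hk : 2 ≤ k) (β : ℝ)
    (hβ0 : 0 < β) (hβ1 : β < 1) (A : Set ℝ) (hAopen : IsOpen A)
    (hA : A ⊆ Set.Ioo 0 1) (hAmeas : MeasureTheory.volume A > ENNReal.ofReal (β / k)) :
    MeasureTheory.volume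
      {x : ℝ | ∃ g : Fin k → ℝ, (∀ i, g i ∈ A) ∧ x = Int.fract (∑ i, g i)} >
      ENNReal.ofReal β := by
  classical
  obtain ⟨m, rfl⟩ : ∃ m, k = m + 1 := ⟨k - 1, by omega⟩
  set S := {x : ℝ | ∃ g : Fin (m+1) → ℝ, (∀ i, g i ∈ A) ∧ x = Int.fract (∑ i, g i)} with hSdef
  have hk0 : (0:ℝ) < (m:ℝ) + 1 := by positivity
  have hc : 0 ≤ β / ((m:ℝ)+1) := by positivity
  have hc' : (0:ℝ) ≤ β / ((m+1 : ℕ) : ℝ) := by push_cast; exact hc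
  obtain ⟨p, hp, hkp, T, hTmem, hTcard⟩ := approx_lemma A hAopen hA (β / ((m+1:ℕ):ℝ)) hc' hAmeas (m+1)
  haveI : NeZero p := ⟨hp.pos.ne'⟩
  have hp0 : (0:ℝ) < p := by exact_mod_cast hp.pos
  have hp2 : 2 ≤ p := hp.two_le
  set T' : Finset (ZMod p) := T.image (Nat.cast : ℕ → ZMod p) with hT'def
  have hinj : Set.InjOn (Nat.cast : ℕ → ZMod p) T := by
    intro a ha b hb hab
    have := congrArg ZMod.val hab
    rwa [ZMod.val_cast_of_lt (hTmem a ha).1, ZMod.val_cast_of_lt (hTmem b hb).1] at this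
  have hcardT' : T'.card = T.card := Finset.card_image_of_injOn hinj
  have hTpos : 0 < T.card := by
    rcases Nat.eq_zero_or_pos T.card with h0 | h0
    · rw [h0] at hTcard
      simp only [Nat.cast_zero, zero_div] at hTcard
      exfalso; exact absurd hTcard (by push_neg; exact hc')
    · exact h0
  have hT'nem : T'.Nonempty := by rw [← Finset.card_pos, hcardT']; exact hTpos
  set E : Finset (ZMod p) := (m+1) • T' with hEdef
  have hE : min p ((m+1) * T.card - m) ≤ E.card := by
    have := nsmul_card_ge hp T' hT'nem m
    rwa [hcardT'] at this
  have hmT : m + 1 ≤ (m+1) * T.card := Nat.le_mul_of_pos_right _ hTpos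
  have hEnem : E.Nonempty := by
    rw [← Finset.card_pos]
    refine lt_of_lt_of_le ?_ hE
    omega
  set J : Finset (ZMod p) := (Finset.range (m+1)).image (Nat.cast : ℕ → ZMod p) with hJdef
  have hJcard : J.card = m + 1 := by
    rw [hJdef, Finset.card_image_of_injOn, Finset.card_range]
    intro a ha b hb hab
    simp only [Finset.coe_range, Set.mem_Iio] at ha hb
    have := congrArg ZMod.val hab
    rwa [ZMod.val_cast_of_lt (by omega), ZMod.val_cast_of_lt (by omega)] at this
  have hJnem : J.Nonempty := by rw [← Finset.card_pos, hJcard]; omega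
  set D : Finset (ZMod p) := E + J with hDdef
  have hD : min p (E.card + J.card - 1) ≤ D.card := ZMod.cauchy_davenport hp hEnem hJnem
  have hDcard : min p ((m+1) * T.card) ≤ D.card := by
    rw [hJcard] at hD
    omega
  -- coverage
  have hcover : ∀ d ∈ D, Set.Ioo (((d.val : ℕ) : ℝ)/p) (((d.val : ℕ) : ℝ)/p + 1/p) ⊆ S := by
    intro d hd
    rw [hDdef, Finset.mem_add] at hd
    obtain ⟨e, he, cc, hcc, rfl⟩ := hd
    obtain ⟨f, hfT, hfsum⟩ := exists_rep T m e he
    rw [hJdef, Finset.mem_image] at hcc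
    obtain ⟨j0, hj0, rfl⟩ := hcc
    rw [Finset.mem_range] at hj0
    set d : ZMod p := e + (j0 : ZMod p) with hddef
    set N : ℕ := (∑ i, f i) + j0 with hNdef
    have hdN : ((N : ℕ) : ZMod p) = d := by
      rw [hNdef, hddef, ← hfsum]; push_cast; ring
    have hval : d.val = N % p := by rw [← hdN, ZMod.val_natCast]
    set M : ℕ := N / p with hMdef
    have hNdecomp : N = p * M + d.val := by rw [hval, hMdef]; exact (Nat.div_add_mod N p).symm
    intro x hx
    obtain ⟨hx1, hx2⟩ := hx
    -- real facts
    have hNreal : (N : ℝ) = p * M + d.val := by exact_mod_cast congrArg (Nat.cast : ℕ → ℝ) hNdecomp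
    have hSfreal : (N : ℝ) = ((∑ i, f i : ℕ) : ℝ) + j0 := by exact_mod_cast congrArg (Nat.cast : ℕ → ℝ) hNdef
    set Sf : ℝ := ((∑ i, f i : ℕ) : ℝ) with hSf
    have hj0r : (j0 : ℝ) ≤ m := by exact_mod_cast Nat.lt_succ_iff.1 hj0
    have hj0r0 : (0:ℝ) ≤ j0 := by positivity
    set s : ℝ := x + M with hsdef
    have hs1 : (N : ℝ)/p < s := by
      rw [hNreal, hsdef]
      rw [div_lt_iff₀ hp0] at hx1 ⊢
      nlinarith
    have hs2 : s < ((N : ℝ)+1)/p := by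
      have h3 : ((d.val : ℕ) : ℝ)/p + 1/p = (((d.val : ℕ) : ℝ)+1)/p := by ring
      rw [h3] at hx2
      rw [hNreal, hsdef]
      rw [lt_div_iff₀ hp0] at hx2 ⊢
      nlinarith
    set r : ℝ := s - Sf/p with hrdef
    have hr0 : 0 < r := by
      have h1 : Sf/p ≤ (N:ℝ)/p := by
        apply div_le_div_of_nonneg_right ?_ hp0.le |>.trans_eq rfl
        linarith [hSfreal, hj0r0]
      rw [hrdef]; linarith
    have hrk : r < ((m:ℝ)+1)/p := by
      have h1 : ((N:ℝ)+1)/p ≤ (Sf + ((m:ℝ)+1))/p := by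
        apply div_le_div_of_nonneg_right ?_ hp0.le |>.trans_eq rfl
        linarith [hSfreal, hj0r]
      rw [hrdef]
      have : (Sf + ((m:ℝ)+1))/p = Sf/p + ((m:ℝ)+1)/p := by ring
      linarith
    set g : Fin (m+1) → ℝ := fun i => (f i : ℝ)/p + r/((m:ℝ)+1) with hgdef
    have hrm0 : 0 < r/((m:ℝ)+1) := by positivity
    have hrm1 : r/((m:ℝ)+1) < 1/p := by
      rw [div_lt_div_iff₀ hk0 hp0]
      have := hrk
      rw [lt_div_iff₀ hp0] at this
      nlinarith
    have hgA : ∀ i, g i ∈ A := by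
      intro i
      apply (hTmem (f i) (hfT i)).2
      constructor
      · rw [hgdef]; simp only; linarith
      · rw [hgdef]; simp only
        have : ((f i : ℝ)+1)/p = (f i : ℝ)/p + 1/p := by ring
        linarith
    have hgsum : ∑ i, g i = s := by
      rw [hgdef]
      rw [Finset.sum_add_distrib, Finset.sum_const, Finset.card_univ, Fintype.card_fin]
      have h1 : ∑ i : Fin (m+1), (f i : ℝ)/p = Sf/p := by
        rw [← Finset.sum_div, hSf]
        push_cast
        ring
      have h2 : (m+1) • (r/((m:ℝ)+1)) = r := by
        rw [nsmul_eq_mul]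
        push_cast
        field_simp
      rw [h1, h2, hrdef]
      ring
    have hx01 : x ∈ Set.Ico (0:ℝ) 1 := by
      constructor
      · have : (0:ℝ) ≤ ((d.val : ℕ) : ℝ)/p := by positivity
        linarith
      · have hvlt : d.val < p := ZMod.val_lt d
        have h1 : ((d.val : ℕ) : ℝ) + 1 ≤ p := by exact_mod_cast hvlt
        have h2 : (((d.val : ℕ) : ℝ) + 1)/p ≤ 1 := by rw [div_le_one hp0]; linarith
        have h3 : ((d.val : ℕ) : ℝ)/p + 1/p = (((d.val : ℕ) : ℝ) + 1)/p := by ring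
        linarith
    refine ⟨g, hgA, ?_⟩
    rw [hgsum, hsdef, Int.fract_add_natCast, Int.fract_eq_self.2 ⟨hx01.1, hx01.2⟩]
  -- measure estimate
  have hdisj : (D : Set (ZMod p)).PairwiseDisjoint
      (fun d : ZMod p => Set.Ioo (((d.val : ℕ) : ℝ)/p) (((d.val : ℕ) : ℝ)/p + 1/p)) := by
    intro a _ b _ hab
    have hvne : a.val ≠ b.val := fun h => hab (ZMod.val_injective _ h)
    rw [Function.onFun, Set.Ioo_disjoint_Ioo]
    rcases Nat.lt_or_ge a.val b.val with h | h
    · have h1 : ((a.val : ℕ) : ℝ) + 1 ≤ ((b.val : ℕ) : ℝ) := by exact_mod_cast h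
      have : ((a.val : ℕ) : ℝ)/p + 1/p ≤ ((b.val : ℕ) : ℝ)/p := by
        rw [← add_div]; gcongr
      calc min (((a.val : ℕ) : ℝ)/p + 1/p) (((b.val : ℕ) : ℝ)/p + 1/p)
          ≤ ((a.val : ℕ) : ℝ)/p + 1/p := min_le_left _ _
        _ ≤ ((b.val : ℕ) : ℝ)/p := this
        _ ≤ max (((a.val : ℕ) : ℝ)/p) (((b.val : ℕ) : ℝ)/p) := le_max_right _ _
    · have hlt : b.val < a.val := by omega
      have h1 : ((b.val : ℕ) : ℝ) + 1 ≤ ((a.val : ℕ) : ℝ) := by exact_mod_cast hlt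
      have : ((b.val : ℕ) : ℝ)/p + 1/p ≤ ((a.val : ℕ) : ℝ)/p := by
        rw [← add_div]; gcongr
      calc min (((a.val : ℕ) : ℝ)/p + 1/p) (((b.val : ℕ) : ℝ)/p + 1/p)
          ≤ ((b.val : ℕ) : ℝ)/p + 1/p := min_le_right _ _
        _ ≤ ((a.val : ℕ) : ℝ)/p := this
        _ ≤ max (((a.val : ℕ) : ℝ)/p) (((b.val : ℕ) : ℝ)/p) := le_max_left _ _
  have hunion : volume (⋃ d ∈ D, Set.Ioo (((d.val : ℕ) : ℝ)/p) (((d.val : ℕ) : ℝ)/p + 1/p))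
      = (D.card : ℝ≥0∞) * ENNReal.ofReal (1/p) := by
    rw [measure_biUnion_finset hdisj (fun d _ => measurableSet_Ioo)]
    have : ∀ d ∈ D, volume (Set.Ioo (((d.val : ℕ) : ℝ)/p) (((d.val : ℕ) : ℝ)/p + 1/p))
        = ENNReal.ofReal (1/p) := by
      intro d _
      rw [Real.volume_Ioo]
      congr 1
      ring
    rw [Finset.sum_congr rfl this, Finset.sum_const, nsmul_eq_mul]
  have hfinal : ENNReal.ofReal β < volume S := by
    have hle : ENNReal.ofReal β < (D.card : ℝ≥0∞) * ENNReal.ofReal (1/p) := by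
      have heq : (D.card : ℝ≥0∞) * ENNReal.ofReal (1/p) = ENNReal.ofReal ((D.card : ℝ)/p) := by
        rw [← ENNReal.ofReal_natCast (D.card), ← ENNReal.ofReal_mul (by positivity)]
        congr 1
        ring
      rw [heq]
      refine (ENNReal.ofReal_lt_ofReal_iff_of_nonneg hβ0.le).2 ?_
      have hTp : β / ((m:ℝ)+1) < (T.card : ℝ) / p := by
        have := hTcard; push_cast at this ⊢; linarith
      rcases le_or_gt p ((m+1) * T.card) with hcase | hcase
      · have hDp : p ≤ D.card := by omega
        have : (1:ℝ) ≤ (D.card : ℝ)/p := by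
          rw [le_div_iff₀ hp0]; exact_mod_cast by simpa using hDp
        linarith
      · have hDk : (m+1) * T.card ≤ D.card := by omega
        have h1 : ((m:ℝ)+1) * (T.card : ℝ) ≤ (D.card : ℝ) := by exact_mod_cast by push_cast; exact_mod_cast hDk
        have h2 : ((m:ℝ)+1) * ((T.card : ℝ)/p) ≤ (D.card : ℝ)/p := by
          rw [← mul_div_assoc]
          apply div_le_div_of_nonneg_right h1 hp0.le |>.trans_eq rfl
        have h3 : β < ((m:ℝ)+1) * ((T.card : ℝ)/p) := by
          have := mul_lt_mul_of_pos_left hTp hk0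
          rwa [mul_div_cancel₀ β (by positivity : ((m:ℝ)+1) ≠ 0)] at this
        linarith
    calc ENNReal.ofReal β < (D.card : ℝ≥0∞) * ENNReal.ofReal (1/p) := hle
      _ = volume (⋃ d ∈ D, Set.Ioo (((d.val : ℕ) : ℝ)/p) (((d.val : ℕ) : ℝ)/p + 1/p)) := hunion.symm
      _ ≤ volume S := by
          apply measure_mono
          exact Set.iUnion₂_subset hcover
  exact hfinal
end
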